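/- Suppose that 𝕊_1, 𝕊_2 ⊆ 𝕊 satisfy 𝕊_1 ∪ 𝕊_2 = 𝕊, and that J ∈ 𝕊 is a cut set for 𝕊_1 and 𝕊_2, meaning 𝕊_1 ∩ 𝕊_2 = {J} and (∪_{S∈𝕊_1} S) ∩ (∪_{S∈𝕊_2} S) = J. Then for every P_𝕊 ∈ 𝒫_𝕊, max{ R(P_{𝕊_1}), R(P_{𝕊_2}) } ≤ R(P_𝕊) ≤ R(P_{𝕊_1}) + R(P_{𝕊_2}), where for 𝕊' ⊆ 𝕊, R(P_{𝕊'}) denotes the incompatibility index of the subfamily (P_S : S ∈ 𝕊') computed with the collection 𝕊'. -/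

import Mathlib

open Finset

/-- The space `𝒳_S = ∏_{j ∈ S} [m_j]`. -/
abbrev Cell {d : ℕ} (m : Fin d → ℕ) (S : Finset (Fin d)) : Type :=
  ∀ j : {x : Fin d // x ∈ S}, Fin (m j.1)

/-- The full space `𝒳 = ∏_{j=1}^d [m_j]`. -/
abbrev Full {d : ℕ} (m : Fin d → ℕ) : Type := ∀ j, Fin (m j)

/-- Coordinate projection `x ↦ x_S`. -/
def proj {d : ℕ} (m : Fin d → ℕ) (S : Finset (Fin d)) (x : Full m) : Cell m S :=
  fun j => x j.1

/-- Coordinate projection `𝒳_S → 𝒳_T` for `T ⊆ S`. -/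
def projSub {d : ℕ} (m : Fin d → ℕ) {S T : Finset (Fin d)} (h : T ⊆ S) (z : Cell m S) :
    Cell m T :=
  fun j => z ⟨j.1, h j.2⟩

/-- `p` is a probability mass function. -/
def IsPMF {α : Type*} [Fintype α] (p : α → ℝ) : Prop :=
  (∀ x, 0 ≤ p x) ∧ ∑ x, p x = 1

/-- `p` is a family of probability mass functions indexed by `𝕊`. -/
def IsFamily {d : ℕ} (m : Fin d → ℕ) (𝕊 : Finset (Finset (Fin d)))
    (p : ∀ S : Finset (Fin d), Cell m S → ℝ) : Prop :=
  ∀ S ∈ 𝕊, IsPMF (p S)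

/-- The family `P_𝕊` is compatible: there is a joint pmf on `𝒳` with the given margins. -/
def Compatible {d : ℕ} (m : Fin d → ℕ) (𝕊 : Finset (Finset (Fin d)))
    (p : ∀ S : Finset (Fin d), Cell m S → ℝ) : Prop :=
  ∃ q : Full m → ℝ, IsPMF q ∧
    ∀ S ∈ 𝕊, ∀ y : Cell m S, p S y = ∑ x : Full m, if proj m S x = y then q x else 0

/-- The marginal mass function of `pS` on `𝒳_T`, for `T ⊆ S`. -/
noncomputable def marg {d : ℕ} (m : Fin d → ℕ) {S : Finset (Fin d)} (T : Finset (Fin d)) (h : T ⊆ S)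
    (pS : Cell m S → ℝ) (y : Cell m T) : ℝ :=
  ∑ z : Cell m S, if projSub m h z = y then pS z else 0

/-- The family `P_𝕊` is consistent: overlapping margins agree. -/
def Consistent {d : ℕ} (m : Fin d → ℕ) (𝕊 : Finset (Finset (Fin d)))
    (p : ∀ S : Finset (Fin d), Cell m S → ℝ) : Prop :=
  ∀ S₁ ∈ 𝕊, ∀ S₂ ∈ 𝕊, (S₁ ∩ S₂).Nonempty →
    marg m (S₁ ∩ S₂) inter_subset_left (p S₁) =
      marg m (S₁ ∩ S₂) inter_subset_right (p S₂)

/-- The class `𝒢_𝕊^+`. -/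
def GPlus {d : ℕ} (m : Fin d → ℕ) (𝕊 : Finset (Finset (Fin d)))
    (f : ∀ S : Finset (Fin d), Cell m S → ℝ) : Prop :=
  (∀ S ∈ 𝕊, ∀ y, -1 ≤ f S y) ∧ ∀ x : Full m, 0 ≤ ∑ S ∈ 𝕊, f S (proj m S x)

/-- The linear functional `R(P_𝕊, f_𝕊)`. -/
noncomputable def RL {d : ℕ} (m : Fin d → ℕ) (𝕊 : Finset (Finset (Fin d)))
    (p f : ∀ S : Finset (Fin d), Cell m S → ℝ) : ℝ :=
  -(1 / (𝕊.card : ℝ)) * ∑ S ∈ 𝕊, ∑ y, f S y * p S y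

/-- The incompatibility index `R(P_𝕊)`. -/
noncomputable def Rix {d : ℕ} (m : Fin d → ℕ) (𝕊 : Finset (Finset (Fin d)))
    (p : ∀ S : Finset (Fin d), Cell m S → ℝ) : ℝ :=
  sSup {t | ∃ f, GPlus m 𝕊 f ∧ t = RL m 𝕊 p f}

/-- Total variation distance between two mass functions on a finite space. -/
noncomputable def dTV {α : Type*} [Fintype α] (p q : α → ℝ) : ℝ :=
  sSup {t | ∃ A : Finset α, t = |∑ y ∈ A, (p y - q y)|}

section aux
variable {d : ℕ} {m : Fin d → ℕ}

lemma exists_proj_eq (hm : ∀ j, 0 < m j) (J : Finset (Fin d))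
    (y : Cell m J) : ∃ x : Full m, proj m J x = y := by
  refine ⟨fun j => if h : j ∈ J then y ⟨j, h⟩ else ⟨0, hm j⟩, ?_⟩
  funext j
  simp [proj, dif_pos j.2]

lemma rixSet_zero_mem (𝕊 : Finset (Finset (Fin d))) (p : ∀ S : Finset (Fin d), Cell m S → ℝ) :
    (0:ℝ) ∈ {t | ∃ f, GPlus m 𝕊 f ∧ t = RL m 𝕊 p f} := by
  refine ⟨fun _ _ => 0, ⟨fun S _ y => by norm_num, fun x => by simp⟩, by simp [RL]⟩

lemma rixSet_bddAbove (𝕊' 𝕊 : Finset (Finset (Fin d))) (hsub : 𝕊' ⊆ 𝕊)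
    (p : ∀ S : Finset (Fin d), Cell m S → ℝ) (hp : IsFamily m 𝕊 p) :
    BddAbove {t | ∃ f, GPlus m 𝕊' f ∧ t = RL m 𝕊' p f} := by
  refine ⟨1, ?_⟩
  rintro t ⟨f, ⟨hf1, _⟩, rfl⟩
  unfold RL
  have key : -(𝕊'.card : ℝ) ≤ ∑ S ∈ 𝕊', ∑ y, f S y * p S y := by
    have : ∀ S ∈ 𝕊', (-1:ℝ) ≤ ∑ y, f S y * p S y := by
      intro S hS
      have hpmf := hp S (hsub hS)
      calc (-1:ℝ) = ∑ y, (-1) * p S y := by simp [hpmf.2]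
        _ ≤ ∑ y, f S y * p S y :=
          Finset.sum_le_sum fun y _ => mul_le_mul_of_nonneg_right (hf1 S hS y) (hpmf.1 y)
    calc -(𝕊'.card : ℝ) = ∑ _S ∈ 𝕊', (-1:ℝ) := by simp
      _ ≤ _ := Finset.sum_le_sum this
  rcases Finset.eq_empty_or_nonempty 𝕊' with h | h
  · simp [h]
  · have hN : (0:ℝ) < 𝕊'.card := by exact_mod_cast Finset.card_pos.mpr h
    have h2 : (1 / (𝕊'.card:ℝ)) * (-(𝕊'.card:ℝ))
        ≤ (1 / (𝕊'.card:ℝ)) * ∑ S ∈ 𝕊', ∑ y, f S y * p S y :=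
      mul_le_mul_of_nonneg_left key (by positivity)
    have h3 : (1 / (𝕊'.card:ℝ)) * (-(𝕊'.card:ℝ)) = -1 := by field_simp
    have h4 : -(1 / (𝕊'.card:ℝ)) * ∑ S ∈ 𝕊', ∑ y, f S y * p S y
        = -((1 / (𝕊'.card:ℝ)) * ∑ S ∈ 𝕊', ∑ y, f S y * p S y) := by ring
    rw [h4]; linarith

lemma Rix_nonneg (𝕊' 𝕊 : Finset (Finset (Fin d))) (hsub : 𝕊' ⊆ 𝕊)
    (p : ∀ S : Finset (Fin d), Cell m S → ℝ) (hp : IsFamily m 𝕊 p) :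
    0 ≤ Rix m 𝕊' p :=
  le_csSup (rixSet_bddAbove 𝕊' 𝕊 hsub p hp) (rixSet_zero_mem 𝕊' p)

lemma Rix_ge (𝕊 : Finset (Finset (Fin d))) (p : ∀ S : Finset (Fin d), Cell m S → ℝ)
    (h𝕊 : 𝕊.Nonempty)
    (hb : BddAbove {t | ∃ f, GPlus m 𝕊 f ∧ t = RL m 𝕊 p f})
    (hp1 : ∀ S ∈ 𝕊, ∑ y, p S y = 1)
    (g : ∀ S : Finset (Fin d), Cell m S → ℝ) (c : ℝ) (hc : 0 < c)
    (hg : ∀ S ∈ 𝕊, ∀ y, 0 ≤ g S y)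
    (hsum : ∀ x : Full m, c ≤ ∑ S ∈ 𝕊, g S (proj m S x)) :
    1 - (1/c) * ∑ S ∈ 𝕊, ∑ y, g S y * p S y ≤ Rix m 𝕊 p := by
  set N : ℝ := (𝕊.card : ℝ) with hNdef
  have hN : 0 < N := by
    have := Finset.card_pos.mpr h𝕊
    simp only [hNdef]; exact_mod_cast this
  apply le_csSup hb
  refine ⟨fun S y => (N / c) * g S y - 1, ⟨?_, ?_⟩, ?_⟩
  · intro S hS y
    have h1 := hg S hS y
    have h2 : 0 ≤ (N/c) * g S y := by positivity
    linarith
  · intro x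
    have he : ∑ S ∈ 𝕊, ((N / c) * g S (proj m S x) - 1)
        = (N/c) * ∑ S ∈ 𝕊, g S (proj m S x) - N := by
      rw [Finset.sum_sub_distrib, Finset.mul_sum]; simp
      exact hNdef.symm
    rw [he]
    have h1 := hsum x
    have h2 : (N/c) * c ≤ (N/c) * ∑ S ∈ 𝕊, g S (proj m S x) :=
      mul_le_mul_of_nonneg_left h1 (by positivity)
    rw [div_mul_cancel₀ _ (ne_of_gt hc)] at h2
    linarith
  · unfold RL
    have expand : ∀ S ∈ 𝕊, ∑ y, ((N / c) * g S y - 1) * p S y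
        = (N/c) * ∑ y, g S y * p S y - 1 := by
      intro S hS
      have he2 : ∑ y, ((N / c) * g S y - 1) * p S y
          = (N/c) * ∑ y, g S y * p S y - ∑ y, p S y := by
        rw [Finset.mul_sum, ← Finset.sum_sub_distrib]
        congr 1; funext y; ring
      rw [he2, hp1 S hS]
    rw [Finset.sum_congr rfl expand, Finset.sum_sub_distrib, Finset.sum_const, ← Finset.mul_sum]
    simp only [nsmul_eq_mul, mul_one]
    rw [← hNdef]
    field_simp
    ring

lemma Rix_mono (𝕊' 𝕊 : Finset (Finset (Fin d))) (hsub : 𝕊' ⊆ 𝕊)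
    (h' : 𝕊'.Nonempty) (h𝕊 : 𝕊.Nonempty)
    (p : ∀ S : Finset (Fin d), Cell m S → ℝ) (hp : IsFamily m 𝕊 p) :
    Rix m 𝕊' p ≤ Rix m 𝕊 p := by
  have h0 : 0 ≤ Rix m 𝕊 p := Rix_nonneg 𝕊 𝕊 Finset.Subset.rfl p hp
  unfold Rix
  apply Real.sSup_le _ h0
  rintro t ⟨f, ⟨hf1, hf2⟩, rfl⟩
  set c : ℝ := (𝕊'.card : ℝ) with hcdef
  have hc : 0 < c := by
    have := Finset.card_pos.mpr h'
    simp only [hcdef]; exact_mod_cast this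
  have key := Rix_ge 𝕊 p h𝕊 (rixSet_bddAbove 𝕊 𝕊 Finset.Subset.rfl p hp)
    (fun S hS => (hp S hS).2)
    (fun S y => if S ∈ 𝕊' then f S y + 1 else 0) c hc ?_ ?_
  · have hval : ∑ S ∈ 𝕊, ∑ y, (if S ∈ 𝕊' then f S y + 1 else 0) * p S y
        = ∑ S ∈ 𝕊', ∑ y, f S y * p S y + c := by
      have e1 : ∑ S ∈ 𝕊, ∑ y, (if S ∈ 𝕊' then f S y + 1 else 0) * p S y
          = ∑ S ∈ 𝕊', ∑ y, (f S y + 1) * p S y := by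
        rw [← Finset.sum_subset hsub (fun S _ hS' => by simp [if_neg hS'])]
        exact Finset.sum_congr rfl fun S hS => by simp [if_pos hS]
      rw [e1]
      have e2 : ∀ S ∈ 𝕊', ∑ y, (f S y + 1) * p S y = ∑ y, f S y * p S y + 1 := by
        intro S hS
        have e3 : ∑ y, (f S y + 1) * p S y = ∑ y, f S y * p S y + ∑ y, p S y := by
          rw [← Finset.sum_add_distrib]; congr 1; funext y; ring
        rw [e3, (hp S (hsub hS)).2]
      rw [Finset.sum_congr rfl e2, Finset.sum_add_distrib, Finset.sum_const, nsmul_eq_mul,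
        mul_one, ← hcdef]
    rw [hval] at key
    have hRL : RL m 𝕊' p f = 1 - 1/c * (∑ S ∈ 𝕊', ∑ y, f S y * p S y + c) := by
      unfold RL
      rw [← hcdef]
      field_simp
      ring
    rw [hRL]
    exact key
  · intro S _ y
    by_cases h : S ∈ 𝕊' <;> simp [h]
    linarith [hf1 S h y]
  · intro x
    have hz : ∑ S ∈ 𝕊, (if S ∈ 𝕊' then f S (proj m S x) + 1 else 0)
        = ∑ S ∈ 𝕊', (f S (proj m S x) + 1) := by
      rw [← Finset.sum_subset hsub (fun S _ hS' => if_neg hS')]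
      exact Finset.sum_congr rfl fun S hS => if_pos hS
    rw [hz, Finset.sum_add_distrib, Finset.sum_const, nsmul_eq_mul, mul_one, ← hcdef]
    linarith [hf2 x]

end aux

/-- Proposition: cut sets. If `J` is a cut set for `𝕊₁` and `𝕊₂`, then
`max(R(P_{𝕊₁}), R(P_{𝕊₂})) ≤ R(P_𝕊) ≤ R(P_{𝕊₁}) + R(P_{𝕊₂})`. -/
theorem statement_13 {d : ℕ} (m : Fin d → ℕ) (hm : ∀ j, 0 < m j)
    (𝕊 𝕊₁ 𝕊₂ : Finset (Finset (Fin d))) (J : Finset (Fin d))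
    (h𝕊 : 𝕊.Nonempty) (hSne : ∀ S ∈ 𝕊, S.Nonempty)
    (hunion : 𝕊₁ ∪ 𝕊₂ = 𝕊) (hinter : 𝕊₁ ∩ 𝕊₂ = {J})
    (hcut : 𝕊₁.sup id ∩ 𝕊₂.sup id = J)
    (p : ∀ S : Finset (Fin d), Cell m S → ℝ) (hp : IsFamily m 𝕊 p) :
    max (Rix m 𝕊₁ p) (Rix m 𝕊₂ p) ≤ Rix m 𝕊 p ∧
      Rix m 𝕊 p ≤ Rix m 𝕊₁ p + Rix m 𝕊₂ p := by
  classical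
  have hsub1 : 𝕊₁ ⊆ 𝕊 := hunion ▸ Finset.subset_union_left
  have hsub2 : 𝕊₂ ⊆ 𝕊 := hunion ▸ Finset.subset_union_right
  have hJ12 : J ∈ 𝕊₁ ∩ 𝕊₂ := hinter ▸ Finset.mem_singleton_self J
  have hJ1 : J ∈ 𝕊₁ := (Finset.mem_inter.mp hJ12).1
  have hJ2 : J ∈ 𝕊₂ := (Finset.mem_inter.mp hJ12).2
  have hne1 : 𝕊₁.Nonempty := ⟨J, hJ1⟩
  have hne2 : 𝕊₂.Nonempty := ⟨J, hJ2⟩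
  constructor
  · exact max_le (Rix_mono 𝕊₁ 𝕊 hsub1 hne1 h𝕊 p hp) (Rix_mono 𝕊₂ 𝕊 hsub2 hne2 h𝕊 p hp)
  set N : ℝ := (𝕊.card : ℝ) with hNdef
  have hN : 0 < N := by
    have := Finset.card_pos.mpr h𝕊
    simp only [hNdef]; exact_mod_cast this
  have hdisj : Disjoint 𝕊₁ (𝕊₂.erase J) := by
    rw [Finset.disjoint_left]
    intro S hS1 hS2
    have hSJ : S ∈ 𝕊₁ ∩ 𝕊₂ := Finset.mem_inter.mpr ⟨hS1, Finset.mem_of_mem_erase hS2⟩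
    rw [hinter, Finset.mem_singleton] at hSJ
    exact (Finset.ne_of_mem_erase hS2) hSJ
  have hset : 𝕊 = 𝕊₁ ∪ 𝕊₂.erase J := by
    ext S
    rw [← hunion]
    simp only [Finset.mem_union, Finset.mem_erase]
    constructor
    · rintro (h | h)
      · exact Or.inl h
      · by_cases hS1 : S ∈ 𝕊₁
        · exact Or.inl hS1
        · refine Or.inr ⟨?_, h⟩
          rintro rfl; exact hS1 hJ1
    · rintro (h | ⟨_, h⟩)
      · exact Or.inl h
      · exact Or.inr h
  have hdec : ∀ F : Finset (Fin d) → ℝ,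
      ∑ S ∈ 𝕊, F S = ∑ S ∈ 𝕊₁, F S + ∑ S ∈ 𝕊₂.erase J, F S := by
    intro F; rw [hset]; exact Finset.sum_union hdisj
  have h0 : 0 ≤ Rix m 𝕊₁ p + Rix m 𝕊₂ p :=
    add_nonneg (Rix_nonneg 𝕊₁ 𝕊 hsub1 p hp) (Rix_nonneg 𝕊₂ 𝕊 hsub2 p hp)
  unfold Rix
  apply Real.sSup_le _ h0
  rintro t ⟨f, ⟨hf1, hf2⟩, rfl⟩
  set g : ∀ S : Finset (Fin d), Cell m S → ℝ := fun S y => f S y + 1 with hgdef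
  have hg : ∀ S ∈ 𝕊, ∀ y, 0 ≤ g S y := by
    intro S hS y
    have := hf1 S hS y
    simp only [hgdef]
    linarith
  have hgsum : ∀ x : Full m, N ≤ ∑ S ∈ 𝕊, g S (proj m S x) := by
    intro x
    have e : ∑ S ∈ 𝕊, g S (proj m S x) = ∑ S ∈ 𝕊, f S (proj m S x) + N := by
      simp only [hgdef]
      rw [Finset.sum_add_distrib, Finset.sum_const, nsmul_eq_mul, mul_one]
    rw [e]
    linarith [hf2 x]
  -- the min function k
  set T : Cell m J → Finset (Full m) :=
    fun y => Finset.univ.filter (fun x => proj m J x = y) with hTdef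
  have hTne : ∀ y, (T y).Nonempty := by
    intro y
    obtain ⟨x, hx⟩ := exists_proj_eq hm J y
    exact ⟨x, by simp [hTdef, hx]⟩
  have hTmem : ∀ x : Full m, x ∈ T (proj m J x) := fun x => by simp [hTdef]
  have hTproj : ∀ y, ∀ x ∈ T y, proj m J x = y := fun y x hx => by simpa [hTdef] using hx
  set G2 : Full m → ℝ := fun x => ∑ S ∈ 𝕊₂.erase J, g S (proj m S x) with hG2def
  set k : Cell m J → ℝ := fun y => min N ((T y).inf' (hTne y) G2) with hkdef
  have k_nonneg : ∀ y, 0 ≤ k y := by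
    intro y
    apply le_min hN.le
    apply Finset.le_inf'
    intro x _
    exact Finset.sum_nonneg fun S hS => hg S (hsub2 (Finset.mem_of_mem_erase hS)) _
  have k_le_N : ∀ y, k y ≤ N := fun y => min_le_left _ _
  have k_le : ∀ x : Full m, k (proj m J x) ≤ G2 x := fun x =>
    (min_le_right _ _).trans (Finset.inf'_le _ (hTmem x))
  have k_key : ∀ x : Full m, N ≤ (∑ S ∈ 𝕊₁, g S (proj m S x)) + k (proj m J x) := by
    intro x
    rcases le_or_gt N ((T (proj m J x)).inf' (hTne _) G2) with h | h
    · have hk : k (proj m J x) = N := min_eq_left h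
      have hpos : 0 ≤ ∑ S ∈ 𝕊₁, g S (proj m S x) :=
        Finset.sum_nonneg fun S hS => hg S (hsub1 hS) _
      rw [hk]; linarith
    · have hk : k (proj m J x) = (T (proj m J x)).inf' (hTne _) G2 := min_eq_right h.le
      obtain ⟨x', hx'T, hx'v⟩ := Finset.exists_mem_eq_inf' (hTne (proj m J x)) G2
      have hx'J : proj m J x' = proj m J x := hTproj _ _ hx'T
      set x'' : Full m := fun j => if j ∈ 𝕊₁.sup id then x j else x' j with hx''def
      have c1 : ∀ S ∈ 𝕊₁, proj m S x'' = proj m S x := by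
        intro S hS
        funext j
        have hj : j.1 ∈ 𝕊₁.sup id := Finset.le_sup (f := id) hS j.2
        simp only [proj, hx''def, if_pos hj]
      have c2 : ∀ S ∈ 𝕊₂.erase J, proj m S x'' = proj m S x' := by
        intro S hS
        funext j
        have hS2 : S ∈ 𝕊₂ := Finset.mem_of_mem_erase hS
        by_cases hj : j.1 ∈ 𝕊₁.sup id
        · have hj2 : j.1 ∈ 𝕊₂.sup id := Finset.le_sup (f := id) hS2 j.2
          have hjJ : j.1 ∈ J := by rw [← hcut]; exact Finset.mem_inter.mpr ⟨hj, hj2⟩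
          have hxx : x j.1 = x' j.1 := (congrFun hx'J ⟨j.1, hjJ⟩).symm
          simp only [proj, hx''def, if_pos hj]
          exact hxx
        · simp only [proj, hx''def, if_neg hj]
      have hkey := hgsum x''
      rw [hdec (fun S => g S (proj m S x''))] at hkey
      have e1 : ∑ S ∈ 𝕊₁, g S (proj m S x'') = ∑ S ∈ 𝕊₁, g S (proj m S x) :=
        Finset.sum_congr rfl fun S hS => by rw [c1 S hS]
      have e2 : ∑ S ∈ 𝕊₂.erase J, g S (proj m S x'') = G2 x' :=
        Finset.sum_congr rfl fun S hS => by rw [c2 S hS]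
      rw [e1, e2, ← hx'v, ← hk] at hkey
      exact hkey
  -- application to 𝕊₁
  set g1 : ∀ S : Finset (Fin d), Cell m S → ℝ :=
    fun S y => g S y + (if h : J ⊆ S ∧ S ⊆ J then k (projSub m h.1 y) else 0) with hg1def
  have hg1 : ∀ S ∈ 𝕊₁, ∀ y, 0 ≤ g1 S y := by
    intro S hS y
    apply add_nonneg (hg S (hsub1 hS) y)
    by_cases h : J ⊆ S ∧ S ⊆ J
    · rw [dif_pos h]; exact k_nonneg _
    · rw [dif_neg h]
  have hsum1 : ∀ x : Full m, N ≤ ∑ S ∈ 𝕊₁, g1 S (proj m S x) := by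
    intro x
    have hone : ∑ S ∈ 𝕊₁,
        (if h : J ⊆ S ∧ S ⊆ J then k (projSub m h.1 (proj m S x)) else 0)
        = k (proj m J x) := by
      rw [Finset.sum_eq_single_of_mem J hJ1 (fun S _ hne =>
        dif_neg fun hcon => hne (Finset.Subset.antisymm hcon.2 hcon.1))]
      rw [dif_pos ⟨Finset.Subset.rfl, Finset.Subset.rfl⟩]; rfl
    have e : ∑ S ∈ 𝕊₁, g1 S (proj m S x)
        = ∑ S ∈ 𝕊₁, g S (proj m S x) + k (proj m J x) := by
      simp only [hg1def]
      rw [Finset.sum_add_distrib, hone]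
    rw [e]
    exact k_key x
  have hval1 : ∑ S ∈ 𝕊₁, ∑ y, g1 S y * p S y
      = ∑ S ∈ 𝕊₁, ∑ y, g S y * p S y + ∑ y, k y * p J y := by
    have e0 : ∀ S ∈ 𝕊₁, ∑ y, g1 S y * p S y
        = ∑ y, g S y * p S y
          + ∑ y, (if h : J ⊆ S ∧ S ⊆ J then k (projSub m h.1 y) else 0) * p S y := by
      intro S _
      simp only [hg1def]
      rw [← Finset.sum_add_distrib]
      congr 1; funext y; ring
    rw [Finset.sum_congr rfl e0, Finset.sum_add_distrib]
    congr 1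
    rw [Finset.sum_eq_single_of_mem J hJ1 (fun S _ hne => by
      have hz : ∀ y : Cell m S,
          (if h : J ⊆ S ∧ S ⊆ J then k (projSub m h.1 y) else 0) = 0 :=
        fun y => dif_neg fun hcon => hne (Finset.Subset.antisymm hcon.2 hcon.1)
      simp [hz])]
    exact Finset.sum_congr rfl fun y _ => by
      rw [dif_pos ⟨Finset.Subset.rfl, Finset.Subset.rfl⟩]; rfl
  have hA := Rix_ge 𝕊₁ p hne1 (rixSet_bddAbove 𝕊₁ 𝕊 hsub1 p hp)
    (fun S hS => (hp S (hsub1 hS)).2) g1 N hN hg1 hsum1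
  rw [hval1] at hA
  -- application to 𝕊₂
  set g2 : ∀ S : Finset (Fin d), Cell m S → ℝ :=
    fun S y => if h : J ⊆ S ∧ S ⊆ J then N - k (projSub m h.1 y) else g S y with hg2def
  have hg2 : ∀ S ∈ 𝕊₂, ∀ y, 0 ≤ g2 S y := by
    intro S hS y
    simp only [hg2def]
    by_cases h : J ⊆ S ∧ S ⊆ J
    · rw [dif_pos h]; linarith [k_le_N (projSub m h.1 y)]
    · rw [dif_neg h]; exact hg S (hsub2 hS) y
  have hsum2 : ∀ x : Full m, N ≤ ∑ S ∈ 𝕊₂, g2 S (proj m S x) := by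
    intro x
    have e : ∑ S ∈ 𝕊₂, g2 S (proj m S x)
        = (N - k (proj m J x)) + ∑ S ∈ 𝕊₂.erase J, g S (proj m S x) := by
      rw [← Finset.add_sum_erase 𝕊₂ _ hJ2]
      congr 1
      · simp only [hg2def]
        rw [dif_pos ⟨Finset.Subset.rfl, Finset.Subset.rfl⟩]; rfl
      · exact Finset.sum_congr rfl fun S hS => by
          simp only [hg2def]
          rw [dif_neg fun hcon =>
            (Finset.ne_of_mem_erase hS) (Finset.Subset.antisymm hcon.2 hcon.1)]
    rw [e]
    have hk2 := k_le x
    simp only [hG2def] at hk2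
    linarith
  have hval2 : ∑ S ∈ 𝕊₂, ∑ y, g2 S y * p S y
      = (N - ∑ y, k y * p J y) + ∑ S ∈ 𝕊₂.erase J, ∑ y, g S y * p S y := by
    rw [← Finset.add_sum_erase 𝕊₂ _ hJ2]
    congr 1
    · have eJ : ∀ y : Cell m J, g2 J y = N - k y := fun y => by
        simp only [hg2def]
        rw [dif_pos ⟨Finset.Subset.rfl, Finset.Subset.rfl⟩]; rfl
      rw [Finset.sum_congr rfl fun y _ => by rw [eJ y]]
      have hsplit : ∑ y, (N - k y) * p J y = N * ∑ y, p J y - ∑ y, k y * p J y := by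
        rw [Finset.mul_sum, ← Finset.sum_sub_distrib]
        congr 1; funext y; ring
      rw [hsplit, (hp J (hsub1 hJ1)).2, mul_one]
    · exact Finset.sum_congr rfl fun S hS => Finset.sum_congr rfl fun y _ => by
        simp only [hg2def]
        rw [dif_neg fun hcon =>
          (Finset.ne_of_mem_erase hS) (Finset.Subset.antisymm hcon.2 hcon.1)]
  have hB := Rix_ge 𝕊₂ p hne2 (rixSet_bddAbove 𝕊₂ 𝕊 hsub2 p hp)
    (fun S hS => (hp S (hsub2 hS)).2) g2 N hN hg2 hsum2
  rw [hval2] at hB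
  -- final arithmetic
  have hG : ∑ S ∈ 𝕊, ∑ y, g S y * p S y = ∑ S ∈ 𝕊, ∑ y, f S y * p S y + N := by
    have e0 : ∀ S ∈ 𝕊, ∑ y, g S y * p S y = ∑ y, f S y * p S y + 1 := by
      intro S hS
      simp only [hgdef]
      have e1 : ∑ y, (f S y + 1) * p S y = ∑ y, f S y * p S y + ∑ y, p S y := by
        rw [← Finset.sum_add_distrib]; congr 1; funext y; ring
      rw [e1, (hp S hS).2]
    rw [Finset.sum_congr rfl e0, Finset.sum_add_distrib, Finset.sum_const, nsmul_eq_mul, mul_one]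
  have hGdec : ∑ S ∈ 𝕊, ∑ y, g S y * p S y
      = ∑ S ∈ 𝕊₁, ∑ y, g S y * p S y + ∑ S ∈ 𝕊₂.erase J, ∑ y, g S y * p S y :=
    hdec _
  have ha3 : (1/N) * N = 1 := one_div_mul_cancel (ne_of_gt hN)
  have ht : RL m 𝕊 p f = 1 - (1/N) * ∑ S ∈ 𝕊, ∑ y, g S y * p S y := by
    unfold RL
    rw [hG, ← hNdef]
    have expand : (1/N) * (∑ S ∈ 𝕊, ∑ y, f S y * p S y + N)
        = (1/N) * ∑ S ∈ 𝕊, ∑ y, f S y * p S y + (1/N) * N := by ring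
    rw [expand, ha3]
    ring
  rw [ht, hGdec]
  have e1 : (1/N) * (∑ S ∈ 𝕊₁, ∑ y, g S y * p S y + ∑ y, k y * p J y)
      = (1/N) * ∑ S ∈ 𝕊₁, ∑ y, g S y * p S y + (1/N) * ∑ y, k y * p J y := by ring
  have e2 : (1/N) * ((N - ∑ y, k y * p J y) + ∑ S ∈ 𝕊₂.erase J, ∑ y, g S y * p S y)
      = (1/N) * N - (1/N) * ∑ y, k y * p J y
        + (1/N) * ∑ S ∈ 𝕊₂.erase J, ∑ y, g S y * p S y := by ring
  have e3 : (1/N) * (∑ S ∈ 𝕊₁, ∑ y, g S y * p S y + ∑ S ∈ 𝕊₂.erase J, ∑ y, g S y * p S y)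
      = (1/N) * ∑ S ∈ 𝕊₁, ∑ y, g S y * p S y
        + (1/N) * ∑ S ∈ 𝕊₂.erase J, ∑ y, g S y * p S y := by ring
  rw [e1] at hA
  rw [e2, ha3] at hB
  rw [e3]
  linarith [hA, hB]
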